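/- Let h : [-1,1] → ℝ be twice continuously differentiable with h(-1) = h(1) = 0 and h'(-1) = h'(1) = 0 (clamped boundary conditions). Then sup_{x ∈ [-1,1]} |h(x)| ≤ (√2/2) · (∫_{-1}^{1} h''(t)² dt)^{1/2}. -/

import Mathlib

open MeasureTheory

/-- Cauchy–Schwarz for interval integrals of continuous functions. -/
lemma cs_interval {a b : ℝ} (hab : a ≤ b) {u v : ℝ → ℝ} (hu : Continuous u)
    (hv : Continuous v) :
    (∫ t in a..b, u t * v t) ^ 2 ≤ (∫ t in a..b, u t ^ 2) * (∫ t in a..b, v t ^ 2) := by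
  set A := ∫ t in a..b, u t ^ 2 with hA
  set B := ∫ t in a..b, u t * v t with hB
  set C := ∫ t in a..b, v t ^ 2 with hC
  have i1 : ∀ l : ℝ, IntervalIntegrable (fun t => l ^ 2 * u t ^ 2) volume a b :=
    fun l => (Continuous.intervalIntegrable (by continuity) _ _)
  have i2 : ∀ l : ℝ, IntervalIntegrable (fun t => (2 * l) * (u t * v t)) volume a b :=
    fun l => (Continuous.intervalIntegrable (by continuity) _ _)
  have i3 : IntervalIntegrable (fun t => v t ^ 2) volume a b :=
    (Continuous.intervalIntegrable (by continuity) _ _)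
  have key : ∀ l : ℝ, 0 ≤ A * (l * l) + (2 * B) * l + C := by
    intro l
    have e : ∀ t : ℝ, (l * u t + v t) ^ 2
        = l ^ 2 * u t ^ 2 + (2 * l) * (u t * v t) + v t ^ 2 := by intro t; ring
    have h1 : (∫ t in a..b, (l * u t + v t) ^ 2) = A * (l * l) + (2 * B) * l + C := by
      simp_rw [e]
      rw [intervalIntegral.integral_add ((i1 l).add (i2 l)) i3,
        intervalIntegral.integral_add (i1 l) (i2 l),
        intervalIntegral.integral_const_mul, intervalIntegral.integral_const_mul]
      ring
    have h0 : 0 ≤ ∫ t in a..b, (l * u t + v t) ^ 2 :=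
      intervalIntegral.integral_nonneg hab (fun t _ => sq_nonneg _)
    rw [h1] at h0
    exact h0
  have hd := discrim_le_zero key
  rw [discrim] at hd
  nlinarith [hd]

set_option maxHeartbeats 1000000 in
/-- Clamped embedding bound: for `h` twice continuously differentiable with
`h(±1) = 0` and `h'(±1) = 0`, one has `‖h‖_{L^∞(-1,1)} ≤ (√2/2) ‖h''‖_{L²(-1,1)}`. -/
theorem stmt_0 (h : ℝ → ℝ) (hreg : ContDiff ℝ 2 h)
    (hb1 : h (-1) = 0) (hb2 : h 1 = 0)
    (hb3 : deriv h (-1) = 0) (hb4 : deriv h 1 = 0) :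
    ∀ x ∈ Set.Icc (-1 : ℝ) 1,
      |h x| ≤ (Real.sqrt 2 / 2) *
        Real.sqrt (∫ t in (-1 : ℝ)..1, (deriv (deriv h) t) ^ 2) := by
  intro x hx
  obtain ⟨hx1, hx2⟩ := hx
  set f := deriv h with hf
  set g := deriv (deriv h) with hg
  -- regularity facts
  have hreg' : ContDiff ℝ (1 + 1) h := by norm_num; exact hreg
  have h1 := contDiff_succ_iff_deriv.mp hreg'
  have hdiffh : Differentiable ℝ h := h1.1
  have hcd1 : ContDiff ℝ 1 (deriv h) := h1.2.2
  have h2 := contDiff_one_iff_deriv.mp hcd1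
  have hdifff : Differentiable ℝ f := h2.1
  have hgc : Continuous g := h2.2
  have hfc : Continuous f := hdifff.continuous
  have hdh : ∀ t : ℝ, HasDerivAt h (f t) t := fun t => (hdiffh t).hasDerivAt
  have hdf : ∀ t : ℝ, HasDerivAt f (g t) t := fun t => (hdifff t).hasDerivAt
  set I := ∫ t in (-1 : ℝ)..1, g t ^ 2 with hI
  have hInn : 0 ≤ I :=
    intervalIntegral.integral_nonneg (by norm_num) (fun t _ => sq_nonneg _)
  -- FTC identity for F t = (x - t) * f t + h t
  have hFTC : ∀ a b : ℝ, ∫ t in a..b, (x - t) * g t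
      = ((x - b) * f b + h b) - ((x - a) * f a + h a) := by
    intro a b
    apply intervalIntegral.integral_eq_sub_of_hasDerivAt
    · intro t _
      have hd : HasDerivAt (fun t : ℝ => (x - t) * f t + h t)
          ((-1) * f t + (x - t) * g t + f t) t :=
        (((hasDerivAt_id t).const_sub x).mul (hdf t)).add (hdh t)
      refine hd.congr_deriv ?_
      ring
    · exact (Continuous.intervalIntegrable (by continuity) _ _)
  -- integral of (x - t)^2
  have hsqint : ∀ a b : ℝ, ∫ t in a..b, (x - t) ^ 2 = ((x - a) ^ 3 - (x - b) ^ 3) / 3 := by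
    intro a b
    rw [intervalIntegral.integral_comp_sub_left (fun t => t ^ 2) x, integral_pow]
    norm_num
  -- subinterval monotonicity for g^2
  have hmono : ∀ a b : ℝ, -1 ≤ a → a ≤ b → b ≤ 1 → (∫ t in a..b, g t ^ 2) ≤ I := by
    intro a b ha hab hb
    exact intervalIntegral.integral_mono_interval ha hab hb
      (Filter.Eventually.of_forall fun t => sq_nonneg _)
      (Continuous.intervalIntegrable (by continuity) _ _)
  -- key quadratic bound: (h x)^2 ≤ I / 3
  have hkey : (h x) ^ 2 ≤ I / 3 := by
    rcases le_total x 0 with hx0 | hx0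
    · -- use the representation on [-1, x]
      have hrep : h x = ∫ t in (-1 : ℝ)..x, (x - t) * g t := by
        rw [hFTC (-1) x]
        simp [hb1, ← hf, hb3]
      have hcs := cs_interval (a := -1) (b := x) hx1
        (u := fun t => x - t) (v := g) (by continuity) hgc
      rw [← hrep, hsqint (-1) x] at hcs
      have hgle := hmono (-1) x le_rfl hx1 hx2
      have hfac : 0 ≤ (-x) * ((x + 1) ^ 2 + (x + 1) + 1) :=
        mul_nonneg (by linarith) (by nlinarith [sq_nonneg (x + 1)])
      have hb : ((x - (-1)) ^ 3 - (x - x) ^ 3) / 3 ≤ 1 / 3 := by nlinarith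
      have hq : 0 ≤ ∫ t in (-1 : ℝ)..x, g t ^ 2 :=
        intervalIntegral.integral_nonneg hx1 (fun t _ => sq_nonneg _)
      have hc : 0 ≤ ((x - (-1)) ^ 3 - (x - x) ^ 3) / 3 := by
        have := pow_nonneg (show (0:ℝ) ≤ x + 1 by linarith) 3
        nlinarith
      have hmul : ((x - (-1)) ^ 3 - (x - x) ^ 3) / 3 * (∫ t in (-1 : ℝ)..x, g t ^ 2)
          ≤ 1 / 3 * I := mul_le_mul hb hgle hq (by norm_num)
      linarith
    · -- use the representation on [x, 1]
      have hrep : h x = -∫ t in x..(1 : ℝ), (x - t) * g t := by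
        rw [hFTC x 1]
        simp [hb2, ← hf, hb4]
      have hcs := cs_interval (a := x) (b := 1) hx2
        (u := fun t => x - t) (v := g) (by continuity) hgc
      have hrep2 : (h x) ^ 2 = (∫ t in x..(1 : ℝ), (x - t) * g t) ^ 2 := by
        rw [hrep]; ring
      rw [← hrep2, hsqint x 1] at hcs
      have hgle := hmono x 1 hx1 hx2 le_rfl
      have hfac : 0 ≤ x * ((1 - x) ^ 2 + (1 - x) + 1) :=
        mul_nonneg (by linarith) (by nlinarith [sq_nonneg (1 - x)])
      have hb : ((x - x) ^ 3 - (x - 1) ^ 3) / 3 ≤ 1 / 3 := by nlinarith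
      have hq : 0 ≤ ∫ t in x..(1 : ℝ), g t ^ 2 :=
        intervalIntegral.integral_nonneg hx2 (fun t _ => sq_nonneg _)
      have hc : 0 ≤ ((x - x) ^ 3 - (x - 1) ^ 3) / 3 := by
        have := pow_nonneg (show (0:ℝ) ≤ 1 - x by linarith) 3
        nlinarith
      have hmul : ((x - x) ^ 3 - (x - 1) ^ 3) / 3 * (∫ t in x..(1 : ℝ), g t ^ 2)
          ≤ 1 / 3 * I := mul_le_mul hb hgle hq (by norm_num)
      linarith
  -- conclude
  have hrhs : (Real.sqrt 2 / 2 * Real.sqrt I) ^ 2 = I / 2 := by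
    rw [mul_pow, div_pow, Real.sq_sqrt (by norm_num : (0:ℝ) ≤ 2), Real.sq_sqrt hInn]
    ring
  rw [← Real.sqrt_sq_eq_abs]
  refine le_trans (Real.sqrt_le_sqrt (show (h x) ^ 2 ≤ (Real.sqrt 2 / 2 * Real.sqrt I) ^ 2 by
    rw [hrhs]; linarith)) ?_
  rw [Real.sqrt_sq (by positivity)]
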